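/- Let G be a finite abelian group, A = {a_1,...,a_k} and B = {b_1,...,b_k} two k-subsets of G, and K a field containing an element of multiplicative order |G|, with Ĝ = Hom(G, K^*). Suppose there is π ∈ S_k such that C = {a_1b_{π(1)},...,a_kb_{π(k)}} has k distinct elements and for every τ ∈ S_k with τ ≠ π the set {a_1b_{τ(1)},...,a_kb_{τ(k)}} differs from C. Then there exist χ_1,...,χ_k ∈ Ĝ such that det(χ_i(a_j))_{1≤i,j≤k} and det(χ_i(b_j))_{1≤i,j≤k} are both nonzero. -/

import Mathlib

open Finset

/-- Expansion of `det (M₁ * M₂)` by multilinearity in the rows. -/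
lemma cb_expand {K : Type*} [Field K] {ι : Type*} [Fintype ι] [DecidableEq ι] {k : ℕ}
    (M₁ : Matrix (Fin k) ι K) (M₂ : Matrix ι (Fin k) K) :
    (M₁ * M₂).det = ∑ s : Fin k → ι, (∏ i, M₁ i (s i)) • (M₂.submatrix s id).det := by
  have h1 : (M₁ * M₂) = Matrix.of fun i => ∑ χ : ι, M₁ i χ • M₂ χ := by
    ext i j
    simp [Matrix.mul_apply, Finset.sum_apply]
  rw [h1]
  calc (Matrix.detRowAlternating (Matrix.of fun i => ∑ χ : ι, M₁ i χ • M₂ χ))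
      = Matrix.detRowAlternating.toMultilinearMap (fun i => ∑ χ : ι, M₁ i χ • M₂ χ) := rfl
    _ = ∑ s : Fin k → ι, Matrix.detRowAlternating.toMultilinearMap
          (fun i => M₁ i (s i) • M₂ (s i)) := MultilinearMap.map_sum _ _
    _ = ∑ s : Fin k → ι, (∏ i, M₁ i (s i)) • (M₂.submatrix s id).det := by
        refine Finset.sum_congr rfl fun s _ => ?_
        rw [MultilinearMap.map_smul_univ]
        rfl

/-- Qualitative Cauchy–Binet: if `det (M₁ * M₂) ≠ 0` then some common selection of `k`
columns of `M₁` / rows of `M₂` has both determinants nonzero. -/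
lemma cb_qual {K : Type*} [Field K] {ι : Type*} [Fintype ι] [DecidableEq ι] {k : ℕ}
    (M₁ : Matrix (Fin k) ι K) (M₂ : Matrix ι (Fin k) K)
    (h : (M₁ * M₂).det ≠ 0) :
    ∃ s : Fin k → ι, (M₁.submatrix id s).det ≠ 0 ∧ (M₂.submatrix s id).det ≠ 0 := by
  by_contra hc
  push_neg at hc
  apply h
  rw [cb_expand]
  set f : (Fin k → ι) → K := fun s => (∏ i, M₁ i (s i)) • (M₂.submatrix s id).det with hf
  rw [← Finset.sum_fiberwise Finset.univ (fun s : Fin k → ι => Finset.image s Finset.univ) f]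
  refine Finset.sum_eq_zero fun S _ => ?_
  by_cases hS : S.card = k
  · have e : ↥S ≃ Fin k := Fintype.equivFinOfCardEq (by rw [Fintype.card_coe, hS])
    set s₀ : Fin k → ι := fun i => ((e.symm i : ↥S) : ι) with hs₀
    have hs₀inj : Function.Injective s₀ :=
      Subtype.coe_injective.comp e.symm.injective
    have hs₀mem : ∀ i, s₀ i ∈ S := fun i => (e.symm i).2
    have hs₀img : Finset.image s₀ Finset.univ = S := by
      apply Finset.eq_of_subset_of_card_le
      · intro x hx
        simp only [Finset.mem_image] at hx
        obtain ⟨i, _, rfl⟩ := hx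
        exact hs₀mem i
      · rw [hS, Finset.card_image_of_injective _ hs₀inj, Finset.card_univ, Fintype.card_fin]
    have hsum : ∑ s ∈ Finset.univ.filter
          (fun s : Fin k → ι => Finset.image s Finset.univ = S), f s
        = ∑ σ : Equiv.Perm (Fin k), f (s₀ ∘ σ) := by
      refine (Finset.sum_bij (fun (σ : Equiv.Perm (Fin k)) _ => s₀ ∘ σ) ?_ ?_ ?_ ?_).symm
      · intro σ _
        simp only [Finset.mem_filter, Finset.mem_univ, true_and]
        rw [← hs₀img]
        ext x
        simp only [Finset.mem_image, Finset.mem_univ, true_and, Function.comp_apply]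
        exact ⟨fun ⟨i, hi⟩ => ⟨σ i, hi⟩, fun ⟨i, hi⟩ => ⟨σ.symm i, by simpa using hi⟩⟩
      · intro σ₁ _ σ₂ _ hσ
        exact Equiv.ext fun i => hs₀inj (congrFun hσ i)
      · intro s hs
        simp only [Finset.mem_filter, Finset.mem_univ, true_and] at hs
        have hmem : ∀ i, s i ∈ S := fun i => by
          rw [← hs]; exact Finset.mem_image_of_mem _ (Finset.mem_univ i)
        have hsinj : Function.Injective s := by
          have hcard : (Finset.image s Finset.univ).card
              = (Finset.univ : Finset (Fin k)).card := by
            rw [hs, hS, Finset.card_univ, Fintype.card_fin]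
          have h2 := Finset.card_image_iff.mp hcard
          exact fun x y hxy => h2 (Finset.mem_univ x) (Finset.mem_univ y) hxy
        set σf : Fin k → Fin k := fun i => e ⟨s i, hmem i⟩ with hσf
        have hσinj : Function.Injective σf :=
          fun x y hxy => hsinj (congrArg Subtype.val (e.injective hxy))
        refine ⟨Equiv.ofBijective σf (Finite.injective_iff_bijective.mp hσinj),
          Finset.mem_univ _, ?_⟩
        ext i
        show s₀ (σf i) = s i
        simp [hs₀, hσf]
      · intro σ _
        rfl
    rw [hsum]
    have step : ∀ σ : Equiv.Perm (Fin k), f (s₀ ∘ σ)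
        = ((Equiv.Perm.sign σ : ℤ) : K) * (∏ i, M₁ i (s₀ (σ i))) * (M₂.submatrix s₀ id).det := by
      intro σ
      show (∏ i, M₁ i ((s₀ ∘ σ) i)) • (M₂.submatrix (s₀ ∘ σ) id).det = _
      have h2 : M₂.submatrix (s₀ ∘ σ) id = (M₂.submatrix s₀ id).submatrix σ id := rfl
      rw [h2, Matrix.det_permute, smul_eq_mul]
      simp only [Function.comp_apply]
      ring
    have hmain : ∑ σ : Equiv.Perm (Fin k), f (s₀ ∘ σ)
        = (M₁.submatrix id s₀).det * (M₂.submatrix s₀ id).det := by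
      rw [Finset.sum_congr rfl fun σ _ => step σ, ← Finset.sum_mul]
      congr 1
      rw [← Matrix.det_transpose (M₁.submatrix id s₀), Matrix.det_apply']
      rfl
    rw [hmain]
    by_cases hA : (M₁.submatrix id s₀).det = 0
    · rw [hA, zero_mul]
    · rw [hc s₀ hA, mul_zero]
  · refine Finset.sum_eq_zero fun s hs => ?_
    simp only [Finset.mem_filter, Finset.mem_univ, true_and] at hs
    have hnotinj : ¬ Function.Injective s := by
      intro hinj
      apply hS
      rw [← hs, Finset.card_image_of_injective _ hinj, Finset.card_univ, Fintype.card_fin]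
    rw [Function.not_injective_iff] at hnotinj
    obtain ⟨i, j, hij, hne⟩ := hnotinj
    have hz : (M₂.submatrix s id).det = 0 :=
      Matrix.det_zero_of_row_eq hne (by ext l; simp [Matrix.submatrix_apply, hij])
    show (∏ i, M₁ i (s i)) • (M₂.submatrix s id).det = 0
    rw [hz, smul_zero]

/-- Characters span the space of `K`-valued functions on `G` when there are `|G|` of them. -/
lemma span_chars {G : Type*} [CommGroup G] [Fintype G] {K : Type*} [Field K]
    [Fintype (G →* Kˣ)] (hcard : Fintype.card (G →* Kˣ) = Fintype.card G) (r : G → K) :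
    ∃ t : (G →* Kˣ) → K, ∀ g, r g = ∑ χ : G →* Kˣ, t χ * (χ g : K) := by
  have hli : LinearIndependent K (fun χ : (G →* Kˣ) => (fun g => (χ g : K))) := by
    have h1 := linearIndependent_monoidHom G K
    have h2 : Function.Injective (fun χ : G →* Kˣ => ((Units.coeHom K).comp χ : G →* K)) := by
      intro χ₁ χ₂ h
      exact MonoidHom.ext fun g => Units.ext (DFunLike.congr_fun h g)
    exact h1.comp _ h2
  have hspan := hli.span_eq_top_of_card_eq_finrank
    (by rw [hcard, Module.finrank_fintype_fun_eq_card])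
  have hr : r ∈ Submodule.span K (Set.range (fun χ : (G →* Kˣ) => (fun g => (χ g : K)))) := by
    rw [hspan]; trivial
  rw [Submodule.mem_span_range_iff_exists_fun] at hr
  obtain ⟨t, ht⟩ := hr
  refine ⟨t, fun g => ?_⟩
  rw [← ht]
  simp [Finset.sum_apply]

/-- Theorem 1.10(ii): if `π` is the unique permutation `τ` for which the set
`{a_1 b_{τ(1)}, ..., a_k b_{τ(k)}}` equals the `k`-set `C = {a_1 b_{π(1)}, ...}`,
then some characters `χ_1, ..., χ_k` make both `det (χ_i (a_j))` and
`det (χ_i (b_j))` nonzero. -/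
theorem unique_perm_implies_dets_ne_zero {G : Type*} [CommGroup G] [Fintype G]
    [DecidableEq G] {K : Type*} [Field K]
    (hK : ∃ x : Kˣ, orderOf x = Fintype.card G)
    {k : ℕ} (a b : Fin k → G) (ha : Function.Injective a) (hb : Function.Injective b)
    (π : Equiv.Perm (Fin k))
    (hπ : Function.Injective (fun i => a i * b (π i)))
    (huniq : ∀ τ : Equiv.Perm (Fin k), τ ≠ π →
      Finset.image (fun i => a i * b (τ i)) Finset.univ ≠
        Finset.image (fun i => a i * b (π i)) Finset.univ) :
    ∃ χ : Fin k → (G →* Kˣ),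
      Matrix.det (Matrix.of fun i j => (χ i (a j) : K)) ≠ 0 ∧
      Matrix.det (Matrix.of fun i j => (χ i (b j) : K)) ≠ 0 := by
  classical
  -- Step 0: character theory set-up
  obtain ⟨x, hx⟩ := hK
  haveI : NeZero (Fintype.card G) := ⟨Fintype.card_pos.ne'⟩
  haveI hEnough : HasEnoughRootsOfUnity K (Fintype.card G) :=
    { prim := ⟨(x : K), IsPrimitiveRoot.coe_units_iff.mpr (hx ▸ IsPrimitiveRoot.orderOf x)⟩
      cyc := inferInstance }
  haveI : HasEnoughRootsOfUnity K (Monoid.exponent G) :=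
    HasEnoughRootsOfUnity.of_dvd K Group.exponent_dvd_card
  obtain ⟨e⟩ := CommGroup.monoidHom_mulEquiv_of_hasEnoughRootsOfUnity G K
  haveI : Fintype (G →* Kˣ) := Fintype.ofEquiv G e.toEquiv.symm
  have hcard : Fintype.card (G →* Kˣ) = Fintype.card G := Fintype.card_congr e.toEquiv
  -- Step 1: the determinant polynomial is nonzero
  set P : MvPolynomial G K :=
    (Matrix.of fun i j => (MvPolynomial.X (a i * b j) : MvPolynomial G K)).det with hPdef
  set d : Equiv.Perm (Fin k) → (G →₀ ℕ) :=
    fun σ => ∑ i, Finsupp.single (a (σ i) * b i) 1 with hddef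
  set m : G →₀ ℕ := ∑ i, Finsupp.single (a i * b (π i)) 1 with hmdef
  have hC : ∀ z : ℤ, ((z : ℤ) : MvPolynomial G K) = MvPolynomial.C ((z : ℤ) : K) :=
    fun z => (map_intCast (MvPolynomial.C : K →+* MvPolynomial G K) z).symm
  have prodX : ∀ σ : Equiv.Perm (Fin k),
      (∏ i, (MvPolynomial.X (a (σ i) * b i) : MvPolynomial G K))
        = MvPolynomial.monomial (d σ) 1 := by
    intro σ
    rw [hddef, MvPolynomial.monomial_sum_one]
    rfl
  have hP : P = ∑ σ : Equiv.Perm (Fin k),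
      MvPolynomial.monomial (d σ) (((Equiv.Perm.sign σ : ℤ) : K)) := by
    rw [hPdef, Matrix.det_apply']
    refine Finset.sum_congr rfl fun σ _ => ?_
    show ((Equiv.Perm.sign σ : ℤ) : MvPolynomial G K) * ∏ i, MvPolynomial.X (a (σ i) * b i) = _
    rw [prodX σ, hC, MvPolynomial.C_mul_monomial, mul_one]
  have hd_iff : ∀ σ : Equiv.Perm (Fin k), d σ = m ↔ σ = π⁻¹ := by
    intro σ
    constructor
    · intro hdm
      have hcount : ∀ g : G, (Finset.univ.filter (fun i => a (σ i) * b i = g)).card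
          = (Finset.univ.filter (fun i => a i * b (π i) = g)).card := by
        intro g
        have h1 := DFunLike.congr_fun hdm g
        rw [hddef, hmdef] at h1
        simp only [Finsupp.finset_sum_apply, Finsupp.single_apply] at h1
        rw [Finset.card_filter, Finset.card_filter]
        exact h1
      have himg : Finset.image (fun j => a j * b (σ⁻¹ j)) Finset.univ
          = Finset.image (fun i => a i * b (π i)) Finset.univ := by
        ext g
        simp only [Finset.mem_image, Finset.mem_univ, true_and]
        constructor
        · rintro ⟨j, rfl⟩
          have h1 : 0 < (Finset.univ.filter
              (fun i => a (σ i) * b i = a j * b (σ⁻¹ j))).card :=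
            Finset.card_pos.mpr ⟨σ⁻¹ j, Finset.mem_filter.mpr ⟨Finset.mem_univ _, by simp⟩⟩
          rw [hcount] at h1
          obtain ⟨i, hi⟩ := Finset.card_pos.mp h1
          exact ⟨i, (Finset.mem_filter.mp hi).2⟩
        · rintro ⟨i, rfl⟩
          have h1 : 0 < (Finset.univ.filter
              (fun p => a p * b (π p) = a i * b (π i))).card :=
            Finset.card_pos.mpr ⟨i, Finset.mem_filter.mpr ⟨Finset.mem_univ _, rfl⟩⟩
          rw [← hcount] at h1
          obtain ⟨p, hp⟩ := Finset.card_pos.mp h1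
          exact ⟨σ p, by simpa using (Finset.mem_filter.mp hp).2⟩
      by_contra hne
      refine huniq σ⁻¹ (fun h => hne ?_) himg
      rw [← h, inv_inv]
    · rintro rfl
      rw [hddef, hmdef]
      rw [show (∑ i, Finsupp.single (a i * b (π i)) (1:ℕ))
          = ∑ i, (fun j => Finsupp.single (a (π⁻¹ j) * b j) (1:ℕ)) (π i) from by simp,
        Equiv.sum_comp π (fun j => Finsupp.single (a (π⁻¹ j) * b j) (1:ℕ))]
  have hPne : P ≠ 0 := by
    have hcoeff : MvPolynomial.coeff m P = ((Equiv.Perm.sign π⁻¹ : ℤ) : K) := by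
      rw [hP, MvPolynomial.coeff_sum]
      rw [Finset.sum_eq_single π⁻¹]
      · rw [MvPolynomial.coeff_monomial, if_pos ((hd_iff π⁻¹).mpr rfl)]
      · intro σ _ hσ
        rw [MvPolynomial.coeff_monomial, if_neg (fun h => hσ ((hd_iff σ).mp h))]
      · intro h
        exact absurd (Finset.mem_univ _) h
    intro h0
    rw [h0, MvPolynomial.coeff_zero] at hcoeff
    rcases Int.units_eq_one_or (Equiv.Perm.sign π⁻¹) with hs | hs <;>
      rw [hs] at hcoeff <;> norm_num at hcoeff
  -- Step 2: the polynomial is homogeneous of degree k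
  have hhom : P.IsHomogeneous k := by
    rw [hP]
    apply MvPolynomial.IsHomogeneous.sum
    intro σ _
    apply MvPolynomial.isHomogeneous_monomial
    rw [hddef, Finsupp.degree_eq_weight_one, map_sum]
    have h1 : ∀ g : G, (Finsupp.weight (1 : G → ℕ)) (Finsupp.single g 1) = 1 := by
      intro g
      rw [Finsupp.weight_apply, Finsupp.sum_single_index] <;> simp
    exact (Finset.sum_congr rfl fun i _ => h1 (a (σ i) * b i)).trans (by simp)
  -- Step 3: cardinality bound and a nonvanishing evaluation
  have hkK : (k : Cardinal) ≤ Cardinal.mk K := by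
    have hk_le : k ≤ Fintype.card G := by
      simpa using Fintype.card_le_of_injective a ha
    have hinjU : Function.Injective (fun i : Fin (Fintype.card G) => (x ^ (i : ℕ) : Kˣ)) := by
      intro i j hij
      have hij' : x ^ (i : ℕ) = x ^ (j : ℕ) := hij
      rw [pow_eq_pow_iff_modEq, hx, Nat.ModEq,
        Nat.mod_eq_of_lt i.isLt, Nat.mod_eq_of_lt j.isLt] at hij'
      exact Fin.ext hij'
    have hinj : Function.Injective
        (fun i : Fin (Fintype.card G) => ((x ^ (i : ℕ) : Kˣ) : K)) :=
      fun i j hij => hinjU (Units.ext hij)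
    calc (k : Cardinal) ≤ (Fintype.card G : Cardinal) := by exact_mod_cast hk_le
      _ = Cardinal.mk (ULift (Fin (Fintype.card G))) := by
          simp [Cardinal.mk_uLift, Cardinal.mk_fin]
      _ ≤ Cardinal.mk K :=
          Cardinal.mk_le_of_injective (hinj.comp ULift.down_injective)
  obtain ⟨r, hr⟩ : ∃ r : G → K, MvPolynomial.eval r P ≠ 0 := by
    by_contra hno
    push_neg at hno
    exact hPne (hhom.eq_zero_of_forall_eval_eq_zero_of_le_card hno hkK)
  have hdetN : (Matrix.of fun i j => r (a i * b j)).det ≠ 0 := by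
    have heq : MvPolynomial.eval r P = (Matrix.of fun i j => r (a i * b j)).det := by
      rw [hPdef, RingHom.map_det]
      congr 1
      ext i j
      simp
    rwa [heq] at hr
  -- Step 4: Fourier expansion and Cauchy–Binet
  obtain ⟨t, ht⟩ := span_chars hcard r
  set M₁ : Matrix (Fin k) (G →* Kˣ) K := Matrix.of fun i χ => t χ * (χ (a i) : K) with hM₁
  set M₂ : Matrix (G →* Kˣ) (Fin k) K := Matrix.of fun χ j => (χ (b j) : K) with hM₂
  have hprod : M₁ * M₂ = Matrix.of fun i j => r (a i * b j) := by
    ext i j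
    rw [Matrix.mul_apply]
    show ∑ χ : G →* Kˣ, (t χ * (χ (a i) : K)) * (χ (b j) : K) = r (a i * b j)
    rw [ht (a i * b j)]
    refine Finset.sum_congr rfl fun χ _ => ?_
    rw [map_mul, Units.val_mul, mul_assoc]
  obtain ⟨s, hA, hB⟩ := cb_qual M₁ M₂ (by rw [hprod]; exact hdetN)
  refine ⟨s, ?_, ?_⟩
  · have hfact : M₁.submatrix id s
        = (Matrix.of fun i j => ((s j) (a i) : K)) * Matrix.diagonal (fun j => t (s j)) := by
      ext i j
      rw [Matrix.mul_diagonal]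
      show t (s j) * ((s j) (a i) : K) = ((s j) (a i) : K) * t (s j)
      ring
    rw [hfact, Matrix.det_mul, Matrix.det_diagonal] at hA
    have hA' : (Matrix.of fun i j => ((s j) (a i) : K)).det ≠ 0 :=
      fun h => hA (by rw [h, zero_mul])
    have htr : (Matrix.of fun i j => ((s i) (a j) : K))
        = (Matrix.of fun i j => ((s j) (a i) : K)).transpose := rfl
    rw [htr, Matrix.det_transpose]
    exact hA'
  · exact hB
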